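/- Let 1 ≤ k ≤ n and ω ≥ 1 be integers and let I ⊆ {1,…,n} with |I| = k. Define w : ℤ → ℤ by w(i + rn) = i − kω + rn + nω·χ_I(i) for i ∈ {1,…,n} and r ∈ ℤ, where χ_I(i) = 1 if i ∈ I and 0 otherwise. Then w is a bijection of ℤ satisfying w(a+n) = w(a) + n for all a ∈ ℤ and Σ_{i=1}^n (w(i) − i) = 0; that is, w is a (0,n) affine permutation, hence an element of the affine Weyl group of type A_{n−1}^{(1)}. -/
import Mathlib


/-- For `I ⊆ {1,…,n}` with `|I| = k`, the map `w : ℤ → ℤ` defined by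
`w (i + rn) = i − kω + rn + nω·χ_I(i)` for `i ∈ {1,…,n}` and `r ∈ ℤ` is a bijection of
`ℤ` with `w (a+n) = w a + n` for all `a` and `Σ_{i=1}^n (w i − i) = 0`; that is, `w` is a
`(0,n)` affine permutation, hence an element of the affine Weyl group of type
`A_{n−1}^{(1)}`. -/
theorem wI_is_affine_Weyl_group_element
    (n ω k : ℕ) (hn : 1 ≤ n) (hω : 1 ≤ ω) (hk : 1 ≤ k) (hkn : k ≤ n)
    (I : Finset ℕ) (hI : I ⊆ Finset.Icc 1 n) (hIcard : I.card = k)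
    (w : ℤ → ℤ)
    (hw : ∀ (i : ℕ) (r : ℤ), 1 ≤ i → i ≤ n →
      w ((i : ℤ) + r * n) =
        (i : ℤ) - k * ω + r * n + (if i ∈ I then (n : ℤ) * ω else 0)) :
    Function.Bijective w ∧
    (∀ a : ℤ, w (a + n) = w a + n) ∧
    (∑ i ∈ Finset.Icc (1 : ℤ) n, (w i - i)) = 0 := by
  have hn0 : (0:ℤ) < (n:ℤ) := by exact_mod_cast hn
  set c : ℤ → ℤ := fun a => if ((a-1) % (n:ℤ)).toNat + 1 ∈ I then (n:ℤ) * ω else 0 with hc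
  have hcdvd : ∀ a, (n:ℤ) ∣ c a := by
    intro a; simp only [hc]
    split
    · exact ⟨ω, rfl⟩
    · exact dvd_zero _
  have hcmod : ∀ a b : ℤ, a % (n:ℤ) = b % (n:ℤ) → c a = c b := by
    intro a b h
    have h2 : (a - 1) % (n:ℤ) = (b - 1) % (n:ℤ) := Int.ModEq.sub_right 1 h
    simp only [hc, h2]
  -- closed formula for w
  have hwf : ∀ a : ℤ, w a = a - (k:ℤ) * ω + c a := by
    intro a
    have h0 : 0 ≤ (a - 1) % (n:ℤ) := Int.emod_nonneg _ (ne_of_gt hn0)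
    have h1 : (a - 1) % (n:ℤ) < n := Int.emod_lt_of_pos _ hn0
    set m : ℕ := ((a - 1) % (n:ℤ)).toNat with hm
    have hmz : (m:ℤ) = (a - 1) % (n:ℤ) := Int.toNat_of_nonneg h0
    have hmlt : (m:ℤ) < n := by rw [hmz]; exact h1
    have hi1 : 1 ≤ m + 1 := Nat.le_add_left 1 m
    have hi2 : m + 1 ≤ n := by omega
    have hdm : (n:ℤ) * ((a-1) / n) + (a-1) % n = a - 1 := Int.mul_ediv_add_emod (a-1) n
    have ha : a = ((m + 1 : ℕ) : ℤ) + ((a-1)/n) * (n:ℤ) := by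
      push_cast; rw [mul_comm]; omega
    have := hw (m+1) ((a-1)/n) hi1 hi2
    rw [← ha] at this
    rw [this, hc]
    push_cast
    have harith : (m:ℤ) + 1 - k*ω + (a-1)/n * n = a - k*ω := by
      rw [mul_comm ((a-1)/n) (n:ℤ)]; omega
    rw [harith]
  have hinj : Function.Injective w := by
    intro a b hab
    rw [hwf a, hwf b] at hab
    have hsub : a - b = c b - c a := by omega
    have hdvd : (n:ℤ) ∣ a - b := hsub ▸ dvd_sub (hcdvd b) (hcdvd a)
    have hmod : a % (n:ℤ) = b % (n:ℤ) := Int.ModEq.symm (Int.modEq_iff_dvd.mpr hdvd)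
    have := hcmod a b hmod
    omega
  have hsurj : Function.Surjective w := by
    intro b
    set a₀ := b + (k:ℤ)*ω with ha₀
    by_cases h : ((a₀-1) % (n:ℤ)).toNat + 1 ∈ I
    · refine ⟨a₀ - (n:ℤ)*ω, ?_⟩
      have hmod : (a₀ - (n:ℤ)*ω) % (n:ℤ) = a₀ % (n:ℤ) := by
        simp [Int.sub_emod, Int.mul_emod_right]
      have hce : c (a₀ - (n:ℤ)*ω) = c a₀ := hcmod _ _ hmod
      have hca : c a₀ = (n:ℤ)*ω := by simp only [hc, if_pos h]
      rw [hwf, hce, hca]; ring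
    · refine ⟨a₀, ?_⟩
      have hca : c a₀ = 0 := by simp only [hc, if_neg h]
      rw [hwf, hca]; ring
  have hshift : ∀ a : ℤ, w (a + n) = w a + n := by
    intro a
    have hmod : (a + (n:ℤ)) % (n:ℤ) = a % (n:ℤ) := by
      simp [Int.add_emod, Int.emod_emod_of_dvd]
    rw [hwf, hwf, hcmod (a + n) a hmod]; ring
  refine ⟨⟨hinj, hsurj⟩, hshift, ?_⟩
  -- the sum
  have hterm : ∀ i ∈ Finset.Icc (1:ℤ) (n:ℤ), w i - i
      = -((k:ℤ)*ω) + (if i.toNat ∈ I then (n:ℤ)*ω else 0) := by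
    intro i hi
    rw [Finset.mem_Icc] at hi
    have h1 : (i - 1) % (n:ℤ) = i - 1 := Int.emod_eq_of_lt (by omega) (by omega)
    have h2 : ((i-1) % (n:ℤ)).toNat + 1 = i.toNat := by rw [h1]; omega
    rw [hwf, hc]
    simp only [h2]
    ring
  rw [Finset.sum_congr rfl hterm, Finset.sum_add_distrib, Finset.sum_const]
  have hcard : (Finset.Icc (1:ℤ) (n:ℤ)).card = n := by
    rw [Int.card_Icc]; omega
  have hsum2 : (∑ i ∈ Finset.Icc (1:ℤ) (n:ℤ), if i.toNat ∈ I then (n:ℤ)*ω else 0)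
      = ∑ j ∈ Finset.Icc 1 n, (if j ∈ I then (n:ℤ)*ω else 0) := by
    refine Finset.sum_nbij' (fun i => i.toNat) (fun j => (j:ℤ)) ?_ ?_ ?_ ?_ ?_
    · intro a ha; simp only [Finset.mem_Icc] at ha ⊢; omega
    · intro a ha; simp only [Finset.mem_Icc] at ha ⊢; omega
    · intro a ha; simp only [Finset.mem_Icc] at ha
      exact Int.toNat_of_nonneg (by omega)
    · intro a ha; simp
    · intro a ha; rfl
  rw [hcard, hsum2]
  have hfil : Finset.filter (· ∈ I) (Finset.Icc 1 n) = I := by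
    rw [Finset.filter_mem_eq_inter, Finset.inter_eq_right.mpr hI]
  rw [Finset.sum_ite, Finset.sum_const_zero, add_zero, Finset.sum_const, hfil, hIcard]
  push_cast
  ring
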